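/- Let V be a finite-dimensional ℤ-graded complex vector space and A, B degree-1 nilpotent endomorphisms of V (both shifting degree by +1). Suppose for every r ≥ 0 and n ∈ ℤ we have rank(Bʳ|_{V_n}) ≤ rank(Aʳ|_{V_n}), and also rank(Bʳ|_{V_n}) ≥ rank(Aʳ|_{V_n}). Then there is a grading-preserving linear automorphism g of V with B = g A g⁻¹. -/

import Mathlib

open Module Submodule

section Aux
variable {V : Type} [AddCommGroup V] [Module ℂ V]

noncomputable def gproj (Vgr : ℤ → Submodule ℂ V) (hint : DirectSum.IsInternal Vgr) (n : ℤ) :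
    V →ₗ[ℂ] V :=
  (Vgr n).subtype ∘ₗ (DirectSum.component ℂ ℤ (fun m => ↥(Vgr m)) n) ∘ₗ
    (LinearEquiv.ofBijective (DirectSum.coeLinearMap Vgr) hint).symm.toLinearMap



variable (Vgr : ℤ → Submodule ℂ V)

lemma gproj_mem (hint : DirectSum.IsInternal Vgr) (n : ℤ) (x : V) : gproj Vgr hint n x ∈ Vgr n := (DirectSum.component ℂ ℤ (fun m => ↥(Vgr m)) n ((LinearEquiv.ofBijective (DirectSum.coeLinearMap Vgr) hint).symm x)).2

lemma gproj_of_mem (hint : DirectSum.IsInternal Vgr) {n : ℤ} {x : V} (hx : x ∈ Vgr n) : gproj Vgr hint n x = x := by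
  simp only [gproj, LinearMap.comp_apply]
  rw [show (DirectSum.component ℂ ℤ (fun m => ↥(Vgr m)) n) ((LinearEquiv.ofBijective (DirectSum.coeLinearMap Vgr) hint).symm.toLinearMap x) = ⟨x, hx⟩ from hint.ofBijective_coeLinearMap_of_mem hx]
  rfl

lemma gproj_of_mem_ne (hint : DirectSum.IsInternal Vgr) {n m : ℤ} (hnm : m ≠ n) {x : V} (hx : x ∈ Vgr m) :
    gproj Vgr hint n x = 0 := by
  simp only [gproj, LinearMap.comp_apply]
  rw [show (DirectSum.component ℂ ℤ (fun m => ↥(Vgr m)) n) ((LinearEquiv.ofBijective (DirectSum.coeLinearMap Vgr) hint).symm.toLinearMap x) = 0 from hint.ofBijective_coeLinearMap_of_mem_ne hnm hx]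
  rfl

/-- x is a finite sum of its homogeneous components. -/
lemma gproj_sum (hint : DirectSum.IsInternal Vgr) (x : V) : ∃ s : Finset ℤ, ∑ n ∈ s, gproj Vgr hint n x = x := by
  classical
  set D := (LinearEquiv.ofBijective (DirectSum.coeLinearMap Vgr) hint).symm with hD
  refine ⟨DFinsupp.support (D x), ?_⟩
  have h1 : ∀ n, gproj Vgr hint n x = ((D x) n : V) := fun n => rfl
  have h2 : DirectSum.coeLinearMap Vgr (D x) = x := by
    rw [hD]; exact (LinearEquiv.ofBijective (DirectSum.coeLinearMap Vgr) hint).apply_symm_apply x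
  calc ∑ n ∈ DFinsupp.support (D x), gproj Vgr hint n x
      = ∑ n ∈ DFinsupp.support (D x), ((D x) n : V) := by simp [h1]
    _ = x := by
        conv_rhs => rw [← h2, DirectSum.coeLinearMap_eq_dfinsuppSum]
        rw [DFinsupp.sum]

/-- linear maps agreeing on homogeneous elements agree -/
lemma gr_ext (hint : DirectSum.IsInternal Vgr) {f g : V →ₗ[ℂ] V} (h : ∀ n, ∀ x ∈ Vgr n, f x = g x) : f = g := by
  ext x
  obtain ⟨s, hs⟩ := gproj_sum Vgr hint x
  rw [← hs, map_sum, map_sum]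
  exact Finset.sum_congr rfl fun n _ => h n _ (gproj_mem Vgr hint n x)

lemma gproj_comm (hint : DirectSum.IsInternal Vgr) {A : Module.End ℂ V} (hAgr : ∀ n, (Vgr n).map A ≤ Vgr (n + 1)) (n : ℤ) (x : V) :
    A (gproj Vgr hint n x) = gproj Vgr hint (n + 1) (A x) := by
  have : A ∘ₗ gproj Vgr hint n = gproj Vgr hint (n + 1) ∘ₗ A := by
    apply gr_ext Vgr hint
    intro m y hy
    have hAy : A y ∈ Vgr (m + 1) := hAgr m ⟨y, hy, rfl⟩
    simp only [LinearMap.comp_apply]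
    by_cases h : m = n
    · subst h
      rw [gproj_of_mem Vgr hint hy, gproj_of_mem Vgr hint hAy]
    · rw [gproj_of_mem_ne Vgr hint h hy, gproj_of_mem_ne Vgr hint (by omega) hAy, map_zero]
  exact congrFun (congrArg (fun f => f.toFun) this) x

lemma graded_extend_aux [FiniteDimensional ℂ V] (hint : DirectSum.IsInternal Vgr)
    (K : Submodule ℂ V) (hK : ∀ x ∈ K, ∀ n, gproj Vgr hint n x ∈ K) :
    ∀ (c : ℕ) (s : Set V), s ⊆ (K : Set V) → (∀ x ∈ s, ∃ n, x ∈ Vgr n) →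
      LinearIndependent ℂ (Subtype.val : ↥s → V) →
      finrank ℂ K ≤ finrank ℂ (span ℂ s) + c →
      ∃ t : Set V, s ⊆ t ∧ t.Finite ∧ t ⊆ (K : Set V) ∧ (∀ x ∈ t, ∃ n, x ∈ Vgr n) ∧
        LinearIndependent ℂ (Subtype.val : ↥t → V) ∧ span ℂ t = K := by
  intro c
  induction c with
  | zero =>
    intro s hsK hhom hli hrank
    refine ⟨s, le_refl _, hli.set_finite_of_isNoetherian, hsK, hhom, hli, ?_⟩
    have h1 : span ℂ s ≤ K := span_le.mpr hsK
    rcases h1.lt_or_eq with h | h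
    · exact absurd (Submodule.finrank_lt_finrank_of_lt h) (by omega)
    · exact h
  | succ c ih =>
    intro s hsK hhom hli hrank
    have h1 : span ℂ s ≤ K := span_le.mpr hsK
    rcases h1.lt_or_eq with h | h
    · -- find homogeneous x' ∈ K, x' ∉ span s
      obtain ⟨x, hxK, hxs⟩ : ∃ x, x ∈ K ∧ x ∉ span ℂ s := by
        by_contra hcon
        push_neg at hcon
        exact absurd (le_antisymm h1 hcon) h.ne
      obtain ⟨m, hm⟩ : ∃ m, gproj Vgr hint m x ∉ span ℂ s := by
        by_contra hcon
        push_neg at hcon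
        obtain ⟨fs, hfs⟩ := gproj_sum Vgr hint x
        exact hxs (hfs ▸ Submodule.sum_mem _ fun n _ => hcon n)
      set x' := gproj Vgr hint m x with hx'
      have hx'K : x' ∈ K := hK x hxK m
      have hx'ne : x' ∉ s := fun hmem => hm (Set.mem_of_mem_of_subset hmem Submodule.subset_span)
      have hli' : LinearIndependent ℂ (Subtype.val : ↥(insert x' s) → V) := LinearIndepOn.insert (v := id) hli (by rw [Set.image_id]; exact hm)
      have hx'0 : x' ≠ 0 := fun h0 => hm (h0 ▸ Submodule.zero_mem _)
      have hrank' : finrank ℂ K ≤ finrank ℂ (span ℂ (insert x' s)) + c := by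
        have : finrank ℂ (span ℂ (insert x' s)) = finrank ℂ (span ℂ s) + 1 := by
          rw [span_insert]
          have hinf : (ℂ ∙ x') ⊓ span ℂ s = ⊥ := by
            rw [eq_bot_iff]
            rintro y ⟨hy1, hy2⟩
            obtain ⟨a, rfl⟩ := Submodule.mem_span_singleton.mp hy1
            rcases eq_or_ne a 0 with rfl | ha
            · simp
            · exact absurd (by simpa [ha] using (span ℂ s).smul_mem a⁻¹ hy2) hm
          have := Submodule.finrank_sup_add_finrank_inf_eq (ℂ ∙ x') (span ℂ s)
          rw [hinf] at this
          simp only [finrank_bot, add_zero] at this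
          rw [this, finrank_span_singleton hx'0, add_comm]
        omega
      obtain ⟨t, hst, ht⟩ := ih (insert x' s) (Set.insert_subset hx'K hsK)
        (fun y hy => by
          rcases Set.mem_insert_iff.mp hy with rfl | hy
          · exact ⟨m, gproj_mem Vgr hint m x⟩
          · exact hhom y hy) hli' hrank'
      exact ⟨t, (Set.subset_insert x' s).trans hst, ht⟩
    · exact ⟨s, le_refl _, hli.set_finite_of_isNoetherian, hsK, hhom, hli, h⟩

lemma pow_mem_inv {A : Module.End ℂ V} {W : Submodule ℂ V} (hinv : ∀ x ∈ W, A x ∈ W) :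
    ∀ (j : ℕ) (x : V), x ∈ W → (A ^ j) x ∈ W := by
  intro j
  induction j with
  | zero => intro x hx; simpa using hx
  | succ j ih =>
    intro x hx
    rw [pow_succ, Module.End.mul_apply]
    exact ih _ (hinv x hx)

lemma pow_deg {A : Module.End ℂ V} (hAgr : ∀ n, (Vgr n).map A ≤ Vgr (n + 1)) :
    ∀ (j : ℕ) (m : ℤ) (x : V), x ∈ Vgr m → (A ^ j) x ∈ Vgr (m + j) := by
  intro j
  induction j with
  | zero => intro m x hx; simpa using hx
  | succ j ih =>
    intro m x hx
    have h1 := ih (m + 1) (A x) (hAgr m ⟨x, hx, rfl⟩)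
    rw [show (A ^ (j+1)) x = (A ^ j) (A x) by rw [pow_succ, Module.End.mul_apply]]
    convert h1 using 2
    push_cast; ring

lemma pow_zero_of_le {A : Module.End ℂ V} {l m : ℕ} (h : l ≤ m) {x : V}
    (hx : (A ^ l) x = 0) : (A ^ m) x = 0 := by
  obtain ⟨c, rfl⟩ := Nat.exists_eq_add_of_le h
  rw [show l + c = c + l by omega, pow_add, Module.End.mul_apply, hx, map_zero]

lemma exists_graded_strings [FiniteDimensional ℂ V] (hint : DirectSum.IsInternal Vgr)
    (A : Module.End ℂ V) (hAgr : ∀ n, (Vgr n).map A ≤ Vgr (n + 1)) (hAnil : IsNilpotent A) :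
    ∀ (d : ℕ) (W : Submodule ℂ V), finrank ℂ W ≤ d →
      (∀ x ∈ W, ∀ n, gproj Vgr hint n x ∈ W) → (∀ x ∈ W, A x ∈ W) →
      ∃ (ι : Type) (_ : Fintype ι) (nn : ι → ℤ) (l : ι → ℕ) (v : ι → V),
        (∀ i, 0 < l i) ∧ (∀ i, v i ∈ W) ∧ (∀ i, v i ∈ Vgr (nn i)) ∧
        (∀ i, (A ^ (l i)) (v i) = 0) ∧
        LinearIndependent ℂ (fun p : (Σ i, Fin (l i)) => (A ^ (p.2 : ℕ)) (v p.1)) ∧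
        span ℂ (Set.range fun p : (Σ i, Fin (l i)) => (A ^ (p.2 : ℕ)) (v p.1)) = W := by
  intro d
  induction d with
  | zero =>
    intro W hd _ _
    have hW : W = ⊥ := Submodule.finrank_eq_zero.mp (by omega)
    subst hW
    refine ⟨Empty, inferInstance, Empty.elim, Empty.elim, Empty.elim, ?_, ?_, ?_, ?_, ?_, ?_⟩
    · exact fun i => i.elim
    · exact fun i => i.elim
    · exact fun i => i.elim
    · exact fun i => i.elim
    · exact linearIndependent_empty_type
    · rw [Set.range_eq_empty, span_empty]
  | succ d ih =>
    intro W hd hWgr hWinv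
    by_cases hbot : W = ⊥
    · subst hbot
      refine ⟨Empty, inferInstance, Empty.elim, Empty.elim, Empty.elim, fun i => i.elim,
        fun i => i.elim, fun i => i.elim, fun i => i.elim, linearIndependent_empty_type, ?_⟩
      rw [Set.range_eq_empty, span_empty]
    -- setup
    set W' := W.map A with hW'def
    have hW'leW : W' ≤ W := by
      rintro _ ⟨x, hx, rfl⟩; exact hWinv x hx
    -- kernel of A on W is nontrivial
    obtain ⟨y, hyW, hy0, hyker⟩ : ∃ y, y ∈ W ∧ y ≠ 0 ∧ A y = 0 := by
      obtain ⟨x, hxW, hx0⟩ := Submodule.exists_mem_ne_zero_of_ne_bot hbot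
      obtain ⟨N, hN⟩ := hAnil
      have hstop : ∃ r, (A ^ r) x = 0 := ⟨N, by rw [hN]; rfl⟩
      classical
      let r := Nat.find hstop
      have hr0 : r ≠ 0 := by
        intro h
        have := Nat.find_spec hstop
        rw [show r = Nat.find hstop from rfl] at h
        rw [h] at this
        simp at this
        exact hx0 this
      refine ⟨(A ^ (r - 1)) x, pow_mem_inv hWinv _ _ hxW, ?_, ?_⟩
      · exact Nat.find_min hstop (by omega)
      · have : (A ^ r) x = 0 := Nat.find_spec hstop
        rw [← this]
        rw [← Module.End.mul_apply, ← pow_succ']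
        congr 2
        omega
    -- rank-nullity
    have hkerbot : LinearMap.ker (A ∘ₗ W.subtype) ≠ ⊥ := by
      intro h
      have : (⟨y, hyW⟩ : W) ∈ LinearMap.ker (A ∘ₗ W.subtype) := by
        simp [LinearMap.mem_ker, hyker]
      rw [h] at this
      simp only [Submodule.mem_bot] at this
      exact hy0 (by simpa [Subtype.ext_iff] using this)
    have hrange : LinearMap.range (A ∘ₗ W.subtype) = W' := by
      rw [LinearMap.range_comp, Submodule.range_subtype]
    have hrn : finrank ℂ W' + finrank ℂ (LinearMap.ker (A ∘ₗ W.subtype)) = finrank ℂ W := by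
      rw [← hrange]
      exact LinearMap.finrank_range_add_finrank_ker (A ∘ₗ W.subtype)
    have hkerpos : 0 < finrank ℂ (LinearMap.ker (A ∘ₗ W.subtype)) := by
      rw [Module.finrank_pos_iff]
      exact Submodule.nontrivial_iff_ne_bot.mpr hkerbot
    have hW'lt : finrank ℂ W' < finrank ℂ W := by omega
    -- W' is graded and invariant
    have hW'gr : ∀ x ∈ W', ∀ n, gproj Vgr hint n x ∈ W' := by
      rintro _ ⟨x, hx, rfl⟩ n
      rw [show n = (n - 1) + 1 by ring, ← gproj_comm Vgr hint hAgr (n-1) x]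
      exact ⟨_, hWgr x hx (n-1), rfl⟩
    have hW'inv : ∀ x ∈ W', A x ∈ W' := by
      rintro _ ⟨x, hx, rfl⟩
      exact ⟨A x, hWinv x hx, rfl⟩
    obtain ⟨ι', inst', n', l', v', hlpos', hvW', hvdeg', hvzero', hli', hspan'⟩ :=
      ih W' (by omega) hW'gr hW'inv
    classical
    haveI : Fintype ι' := inst'
    -- homogeneous preimages u i of the string starts v' i
    have hpre : ∀ i : ι', ∃ ww, ww ∈ W ∧ A ww = v' i := by
      intro i; rcases hvW' i with ⟨ww, hw, hAw⟩; exact ⟨ww, hw, hAw⟩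
    choose w hwW hAw using hpre
    set u : ι' → V := fun i => gproj Vgr hint (n' i - 1) (w i) with hu
    have huW : ∀ i, u i ∈ W := fun i => hWgr _ (hwW i) _
    have hudeg : ∀ i, u i ∈ Vgr (n' i - 1) := fun i => gproj_mem Vgr hint _ _
    have hAu : ∀ i, A (u i) = v' i := by
      intro i
      rw [hu]; dsimp only
      rw [gproj_comm Vgr hint hAgr, sub_add_cancel, hAw i]
      exact gproj_of_mem Vgr hint (hvdeg' i)
    have hv'W : ∀ i, v' i ∈ W := fun i => hW'leW (hvW' i)
    -- string ends
    set F' : (Σ i : ι', Fin (l' i)) → V := fun p => (A ^ (p.2 : ℕ)) (v' p.1) with hF'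
    set e : ι' → V := fun i => (A ^ (l' i - 1)) (v' i) with he
    have hetop : ∀ i, e i = (A ^ (l' i)) (u i) := by
      intro i
      rw [he]; dsimp only
      conv_rhs => rw [show l' i = (l' i - 1) + 1 by have := hlpos' i; omega]
      rw [pow_succ, Module.End.mul_apply, hAu i]
    have heli : LinearIndependent ℂ e := by
      have h1 : Function.Injective
          (fun i : ι' => (⟨i, ⟨l' i - 1, by have := hlpos' i; omega⟩⟩ : Σ i, Fin (l' i))) :=
        fun a b hab => congrArg Sigma.fst hab
      have h2 := hli'.comp _ h1
      exact h2
    have heker : ∀ i, A (e i) = 0 := by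
      intro i
      rw [he]; dsimp only
      rw [← Module.End.mul_apply, ← pow_succ', show l' i - 1 + 1 = l' i by have := hlpos' i; omega]
      exact hvzero' i
    have heW : ∀ i, e i ∈ W := fun i => pow_mem_inv hWinv _ _ (hv'W i)
    have hedeg : ∀ i, e i ∈ Vgr (n' i + (l' i - 1 : ℕ)) := fun i =>
      pow_deg Vgr hAgr _ _ _ (hvdeg' i)
    -- the kernel piece
    set K := LinearMap.ker A ⊓ W with hKdef
    have hKgr : ∀ x ∈ K, ∀ n, gproj Vgr hint n x ∈ K := by
      rintro x ⟨hx1, hx2⟩ n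
      refine ⟨?_, hWgr x hx2 n⟩
      have hx1' : A x = 0 := hx1
      refine LinearMap.mem_ker.mpr ?_
      rw [gproj_comm Vgr hint hAgr, hx1', map_zero]
    have heK : Set.range e ⊆ (K : Set V) := by
      rintro _ ⟨i, rfl⟩
      exact ⟨LinearMap.mem_ker.mpr (heker i), heW i⟩
    obtain ⟨t, hst, htfin, htK, hthom, htli, htspan⟩ :=
      graded_extend_aux Vgr hint K hKgr (finrank ℂ K) (Set.range e) heK
        (by rintro _ ⟨i, rfl⟩; exact ⟨_, hedeg i⟩) heli.linearIndepOn_id le_add_self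
    haveI htFin : Fintype ↥t := htfin.fintype
    set zset : Set V := t \ Set.range e with hzset
    haveI hzFin : Fintype ↥zset := (htfin.subset Set.diff_subset).fintype
    have hzdeg : ∀ z : ↥zset, ∃ n, (z : V) ∈ Vgr n := fun z => hthom _ (Set.diff_subset z.2)
    choose md hmd using hzdeg
    -- assemble the new string data
    set ι : Type := ι' ⊕ ↥zset with hι
    set nn : ι → ℤ := Sum.elim (fun i => n' i - 1) md with hnn
    set l : ι → ℕ := Sum.elim (fun i => l' i + 1) (fun _ => 1) with hl
    set v : ι → V := Sum.elim u (fun z => (z : V)) with hv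
    set F : (Σ i : ι, Fin (l i)) → V := fun p => (A ^ (p.2 : ℕ)) (v p.1) with hF
    have hvW : ∀ i, v i ∈ W := by
      rintro (i | z)
      · exact huW i
      · exact (htK (Set.diff_subset z.2)).2
    have hvdeg : ∀ i, v i ∈ Vgr (nn i) := by
      rintro (i | z)
      · exact hudeg i
      · exact hmd z
    have hvzero : ∀ i, (A ^ (l i)) (v i) = 0 := by
      rintro (i | z)
      · show (A ^ (l' i + 1)) (u i) = 0
        rw [pow_succ, Module.End.mul_apply, hAu i]
        exact hvzero' i
      · show (A ^ 1) (z : V) = 0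
        rw [pow_one]
        exact LinearMap.mem_ker.mp (htK (Set.diff_subset z.2)).1
    -- spanning
    have hFW : ∀ p : (Σ i : ι, Fin (l i)), F p ∈ W :=
      fun p => pow_mem_inv hWinv _ _ (hvW p.1)
    have hF'S : ∀ p : (Σ i : ι', Fin (l' i)), F' p ∈ span ℂ (Set.range F) := by
      rintro ⟨i, j⟩
      have h1 : (A ^ ((j : ℕ) + 1)) (u i) = (A ^ (j : ℕ)) (v' i) := by
        rw [pow_succ, Module.End.mul_apply, hAu i]
      refine subset_span ⟨⟨Sum.inl i, ⟨(j : ℕ) + 1, by simp only [hl, Sum.elim_inl]; omega⟩⟩, h1⟩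
    have hW'S : W' ≤ span ℂ (Set.range F) := by
      rw [← hspan']
      refine span_le.mpr ?_
      rintro _ ⟨p, rfl⟩
      exact hF'S p
    have htS : t ⊆ (span ℂ (Set.range F) : Set V) := by
      intro x hx
      by_cases hxe : x ∈ Set.range e
      · obtain ⟨i, rfl⟩ := hxe
        rw [hetop i]
        exact subset_span ⟨⟨Sum.inl i, ⟨l' i, by simp [hl]⟩⟩, rfl⟩
      · refine subset_span ⟨⟨Sum.inr ⟨x, ⟨hx, hxe⟩⟩, ⟨0, by simp [hl]⟩⟩, ?_⟩
        show (A ^ 0) _ = x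
        rw [pow_zero]
        rfl
    have hKS : K ≤ span ℂ (Set.range F) := by
      rw [← htspan]
      exact span_le.mpr htS
    set U := span ℂ (Set.range fun p : (Σ i : ι', Fin (l' i)) => (A ^ (p.2 : ℕ)) (u p.1))
      with hU
    have hUS : U ≤ span ℂ (Set.range F) := by
      refine span_le.mpr ?_
      rintro _ ⟨⟨i, j⟩, rfl⟩
      exact subset_span ⟨⟨Sum.inl i, ⟨(j : ℕ), by simp [hl]⟩⟩, rfl⟩
    have hUW : U ≤ W := by
      refine span_le.mpr ?_
      rintro _ ⟨⟨i, j⟩, rfl⟩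
      exact pow_mem_inv hWinv _ _ (huW i)
    have hmapU : U.map A = W' := by
      rw [hU, Submodule.map_span, ← Set.range_comp]
      rw [← hspan']
      congr 1
      apply congrArg
      funext p
      show A ((A ^ (p.2 : ℕ)) (u p.1)) = (A ^ (p.2 : ℕ)) (v' p.1)
      rw [← Module.End.mul_apply, ← pow_succ', pow_succ, Module.End.mul_apply, hAu]
    have hspanW : span ℂ (Set.range F) = W := by
      refine le_antisymm (span_le.mpr (by rintro _ ⟨p, rfl⟩; exact hFW p)) ?_
      intro x hx
      have hAx : A x ∈ U.map A := by
        rw [hmapU]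
        exact ⟨x, hx, rfl⟩
      obtain ⟨y, hyU, hAy⟩ := hAx
      have h1 : x - y ∈ K := by
        refine ⟨LinearMap.mem_ker.mpr ?_, sub_mem hx (hUW hyU)⟩
        rw [map_sub, hAy, sub_self]
      have := add_mem (hKS h1) (hUS hyU)
      rwa [sub_add_cancel] at this
    -- cardinality
    have hcard2 : finrank ℂ W' = Fintype.card (Σ i : ι', Fin (l' i)) := by
      rw [← hspan']
      exact finrank_span_eq_card hli'
    have hcardt : finrank ℂ K = Fintype.card ↥t := by
      rw [← htspan, finrank_span_set_eq_card htli, Set.toFinset_card]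
    have hcard_t_split : Fintype.card ↥t = Fintype.card ι' + Fintype.card ↥zset := by
      have h1 : Set.ncard (t \ Set.range e) + Set.ncard (Set.range e) = Set.ncard t :=
        Set.ncard_diff_add_ncard_of_subset hst htfin
      have h2 : Set.ncard (Set.range e) = Fintype.card ι' := by
        rw [Set.ncard_eq_toFinset_card', Set.toFinset_range, Finset.card_image_of_injective _ heli.injective, Finset.card_univ]
      have h3 : Set.ncard t = Fintype.card ↥t := by
        rw [Set.ncard_eq_toFinset_card', Set.toFinset_card]
      have h4 : Set.ncard zset = Fintype.card ↥zset := by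
        rw [Set.ncard_eq_toFinset_card', Set.toFinset_card]
      rw [h3, h2, h4] at h1
      omega
    have hkerK : finrank ℂ (LinearMap.ker (A ∘ₗ W.subtype)) = finrank ℂ K := by
      have h1 : LinearMap.ker (A ∘ₗ W.subtype) = comap W.subtype K := by
        rw [LinearMap.ker_comp, hKdef, Submodule.comap_inf, Submodule.comap_subtype_self,
          inf_top_eq]
      rw [h1]
      exact (Submodule.comapSubtypeEquivOfLe (inf_le_right : K ≤ W)).finrank_eq
    have hcard : Fintype.card (Σ p : ι, Fin (l p)) = finrank ℂ W := by
      rw [Fintype.card_sigma]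
      have hsum : ∑ i : ι, Fintype.card (Fin (l i)) =
          (∑ i : ι', (l' i + 1)) + ∑ z : ↥zset, 1 := by
        simp only [Fintype.card_fin]
        exact Fintype.sum_sum_type _
      rw [hsum]
      have h5 : ∑ i : ι', (l' i + 1) = (∑ i : ι', l' i) + Fintype.card ι' := by
        rw [Finset.sum_add_distrib, Finset.card_univ.symm]
        simp
      have h6 : (∑ _z : ↥zset, 1) = Fintype.card ↥zset := by
        rw [Finset.sum_const, smul_eq_mul, mul_one, Finset.card_univ]
      have h7 : Fintype.card (Σ i : ι', Fin (l' i)) = ∑ i : ι', l' i := by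
        rw [Fintype.card_sigma]
        simp
      rw [h5, h6]
      rw [hkerK, hcardt, hcard_t_split] at hrn
      omega
    have hliF : LinearIndependent ℂ F := by
      rw [linearIndependent_iff_card_eq_finrank_span]
      show Fintype.card (Σ p : ι, Fin (l p)) = finrank ℂ (span ℂ (Set.range F))
      rw [hspanW, hcard]
    exact ⟨ι, inferInstance, nn, l, v, (by rintro (i | z) <;> simp [hl]), hvW, hvdeg, hvzero,
      hliF, hspanW⟩

lemma card_filter_partition {α : Type} (M : Multiset α) (p q r : α → Prop)
    [DecidablePred p] [DecidablePred q] [DecidablePred r]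
    (h1 : ∀ a, p a ↔ q a ∨ r a) (h2 : ∀ a, ¬(q a ∧ r a)) :
    (M.filter p).card = (M.filter q).card + (M.filter r).card := by
  have e1 : (M.filter p).filter q = M.filter q := by
    rw [Multiset.filter_filter]
    exact Multiset.filter_congr (fun x _ => by
      constructor
      · exact fun h => h.1
      · exact fun h => ⟨h, (h1 x).mpr (Or.inl h)⟩)
  have e2 : (M.filter p).filter (fun a => ¬ q a) = M.filter r := by
    rw [Multiset.filter_filter]
    exact Multiset.filter_congr (fun x _ => by
      constructor
      · rintro ⟨hnq, hp⟩
        rcases (h1 x).mp hp with h | h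
        · exact absurd h hnq
        · exact h
      · intro hr
        exact ⟨fun hq => h2 x ⟨hq, hr⟩, (h1 x).mpr (Or.inr hr)⟩)
  conv_lhs => rw [← Multiset.filter_add_not q (M.filter p)]
  rw [Multiset.card_add, e1, e2]

lemma multiset_eq_of_rank_eq (M M' : Multiset (ℤ × ℕ))
    (h0 : ∀ p ∈ M, 0 < p.2) (h0' : ∀ p ∈ M', 0 < p.2)
    (h : ∀ (n : ℤ) (r : ℕ),
      (M.filter (fun q => q.1 ≤ n ∧ (n - q.1).toNat + r < q.2)).card =
      (M'.filter (fun q => q.1 ≤ n ∧ (n - q.1).toNat + r < q.2)).card) :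
    M = M' := by
  classical
  have hQ : ∀ (N : Multiset (ℤ × ℕ)) (n : ℤ) (r : ℕ),
      (N.filter (fun q => q.1 ≤ n ∧ (n - q.1).toNat + r < q.2)).card =
      (N.filter (fun q => q.1 ≤ n ∧ (n - q.1).toNat + (r+1) < q.2)).card +
      (N.filter (fun q => q.1 ≤ n ∧ q.2 = (n - q.1).toNat + r + 1)).card := by
    intro N n r
    apply card_filter_partition
    · intro a; omega
    · intro a; omega
  have hE : ∀ (n : ℤ) (r : ℕ),
      (M.filter (fun q => q.1 ≤ n ∧ q.2 = (n - q.1).toNat + r + 1)).card =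
      (M'.filter (fun q => q.1 ≤ n ∧ q.2 = (n - q.1).toNat + r + 1)).card := by
    intro n r
    have q1 := hQ M n r
    have q2 := hQ M' n r
    have q3 := h n r
    have q4 := h n (r+1)
    omega
  have hcnt : ∀ (N : Multiset (ℤ × ℕ)) (n : ℤ) (r : ℕ),
      (N.filter (fun q => q.1 ≤ n ∧ q.2 = (n - q.1).toNat + r + 1)).card =
      (N.filter (fun q => q.1 ≤ n - 1 ∧ q.2 = (n - 1 - q.1).toNat + (r+1) + 1)).card +
      (N.filter (fun q => (n, r+1) = q)).card := by
    intro N n r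
    apply card_filter_partition
    · rintro ⟨a1, a2⟩
      simp only [Prod.mk.injEq, Prod.fst, Prod.snd]
      omega
    · rintro ⟨a1, a2⟩
      simp only [Prod.mk.injEq, Prod.fst, Prod.snd]
      omega
  ext ⟨s, l⟩
  rcases Nat.eq_zero_or_pos l with rfl | hl
  · rw [Multiset.count_eq_zero.mpr, Multiset.count_eq_zero.mpr]
    · intro hmem; exact absurd (h0' _ hmem) (by simp)
    · intro hmem; exact absurd (h0 _ hmem) (by simp)
  · obtain ⟨r, rfl⟩ : ∃ r, l = r + 1 := ⟨l - 1, by omega⟩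
    rw [Multiset.count_eq_card_filter_eq, Multiset.count_eq_card_filter_eq]
    have c1 := hcnt M s r
    have c2 := hcnt M' s r
    have e1 := hE s r
    have e2 := hE (s-1) (r+1)
    have e2' : (M.filter (fun q => q.1 ≤ s - 1 ∧ q.2 = (s - 1 - q.1).toNat + (r+1) + 1)).card =
        (M'.filter (fun q => q.1 ≤ s - 1 ∧ q.2 = (s - 1 - q.1).toNat + (r+1) + 1)).card := e2
    omega

lemma equiv_of_map_univ_eq {α β : Type} [Fintype α] [Fintype β] (f : α → ℤ × ℕ) (g : β → ℤ × ℕ)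
    (h : Multiset.map f Finset.univ.val = Multiset.map g Finset.univ.val) :
    ∃ e : α ≃ β, ∀ a, g (e a) = f a := by
  classical
  have hcard : ∀ c, Fintype.card {a // f a = c} = Fintype.card {b // g b = c} := by
    intro c
    have h1 := congrArg (Multiset.count c) h
    rw [Multiset.count_map, Multiset.count_map] at h1
    rw [Fintype.card_subtype, Fintype.card_subtype]
    have e1 : (Finset.filter (fun a => f a = c) Finset.univ).card =
        (Multiset.filter (fun a => c = f a) Finset.univ.val).card := by
      rw [Finset.card, Finset.filter_val]
      congr 1
      exact Multiset.filter_congr (fun x _ => eq_comm)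
    have e2 : (Finset.filter (fun b => g b = c) Finset.univ).card =
        (Multiset.filter (fun b => c = g b) Finset.univ.val).card := by
      rw [Finset.card, Finset.filter_val]
      congr 1
      exact Multiset.filter_congr (fun x _ => eq_comm)
    rw [e1, e2, h1]
  refine ⟨((Equiv.sigmaFiberEquiv f).symm.trans
    ((Equiv.sigmaCongrRight (fun c => Fintype.equivOfCardEq (hcard c))).trans
      (Equiv.sigmaFiberEquiv g))), ?_⟩
  intro a
  exact ((Fintype.equivOfCardEq (hcard (f a))) ⟨a, rfl⟩).2

section StringData
variable {A : Module.End ℂ V}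
variable {ι : Type} [Fintype ι] {nn : ι → ℤ} {l : ι → ℕ} {v : ι → V}

/-- Each graded piece is spanned by the basis vectors of that degree. -/
lemma graded_piece_span (hint : DirectSum.IsInternal Vgr) (hAgr : ∀ n, (Vgr n).map A ≤ Vgr (n + 1))
    (hvdeg : ∀ i, v i ∈ Vgr (nn i))
    (hli : LinearIndependent ℂ (fun p : (Σ i, Fin (l i)) => (A ^ (p.2 : ℕ)) (v p.1)))
    (hspan : span ℂ (Set.range fun p : (Σ i, Fin (l i)) => (A ^ (p.2 : ℕ)) (v p.1)) = ⊤)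
    (n : ℤ) :
    Vgr n = span ℂ ((fun p : (Σ i, Fin (l i)) => (A ^ (p.2 : ℕ)) (v p.1)) ''
      {p | nn p.1 + (p.2 : ℕ) = n}) := by
  classical
  set F := fun p : (Σ i, Fin (l i)) => (A ^ (p.2 : ℕ)) (v p.1) with hF
  have hdegF : ∀ p : (Σ i, Fin (l i)), F p ∈ Vgr (nn p.1 + (p.2 : ℕ)) :=
    fun p => pow_deg Vgr hAgr _ _ _ (hvdeg p.1)
  apply le_antisymm
  · intro x hx
    set b : Basis (Σ i, Fin (l i)) ℂ V := Basis.mk hli (by rw [hspan]) with hb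
    have hbF : ∀ p, b p = F p := fun p => by rw [hb, Basis.mk_apply]
    have hrepr : ∑ p : (Σ i, Fin (l i)), b.repr x p • b p = x := b.sum_repr x
    have h1 : x = ∑ p : (Σ i, Fin (l i)), b.repr x p • gproj Vgr hint n (b p) := by
      calc x = gproj Vgr hint n x := (gproj_of_mem Vgr hint hx).symm
        _ = gproj Vgr hint n (∑ p, b.repr x p • b p) := by rw [hrepr]
        _ = ∑ p, b.repr x p • gproj Vgr hint n (b p) := by
            rw [map_sum]
            exact Finset.sum_congr rfl fun p _ => by rw [map_smul]
    rw [h1]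
    apply Submodule.sum_mem
    intro p _
    by_cases hp : nn p.1 + (p.2 : ℕ) = n
    · rw [hbF p, gproj_of_mem Vgr hint (hp ▸ hdegF p)]
      exact smul_mem _ _ (subset_span ⟨p, hp, rfl⟩)
    · rw [hbF p, gproj_of_mem_ne Vgr hint hp (hdegF p), smul_zero]
      exact zero_mem _
  · rw [span_le]
    rintro _ ⟨p, hp, rfl⟩
    exact hp ▸ hdegF p

/-- Rank formula. -/
lemma rank_formula (hint : DirectSum.IsInternal Vgr) (hAgr : ∀ n, (Vgr n).map A ≤ Vgr (n + 1))
    (hvdeg : ∀ i, v i ∈ Vgr (nn i))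
    (hvzero : ∀ i, (A ^ (l i)) (v i) = 0)
    (hli : LinearIndependent ℂ (fun p : (Σ i, Fin (l i)) => (A ^ (p.2 : ℕ)) (v p.1)))
    (hspan : span ℂ (Set.range fun p : (Σ i, Fin (l i)) => (A ^ (p.2 : ℕ)) (v p.1)) = ⊤)
    (r : ℕ) (n : ℤ) :
    finrank ℂ ((Vgr n).map (A ^ r)) =
      Fintype.card {i : ι // nn i ≤ n ∧ (n - nn i).toNat + r < l i} := by
  classical
  set F := fun p : (Σ i, Fin (l i)) => (A ^ (p.2 : ℕ)) (v p.1) with hF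
  set I := {i : ι // nn i ≤ n ∧ (n - nn i).toNat + r < l i} with hI
  set G : I → V := fun i => F ⟨i.1, ⟨(n - nn i.1).toNat + r, i.2.2⟩⟩ with hG
  have hspn : (Vgr n).map (A ^ r) = span ℂ (Set.range G) := by
    rw [graded_piece_span Vgr hint hAgr hvdeg hli hspan n, Submodule.map_span,
      ← Set.image_comp]
    apply le_antisymm
    · rw [span_le]
      rintro _ ⟨⟨i, j⟩, hp, rfl⟩
      simp only [Set.mem_setOf_eq] at hp
      show (A ^ r) ((A ^ (j : ℕ)) (v i)) ∈ span ℂ (Set.range G)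
      rw [← Module.End.mul_apply, ← pow_add]
      by_cases hcase : (j : ℕ) + r < l i
      · have hj : (j : ℕ) = (n - nn i).toNat := by omega
        have : (A ^ (r + (j : ℕ))) (v i) = G ⟨i, ⟨by omega, by omega⟩⟩ := by
          show _ = (A ^ ((n - nn i).toNat + r)) (v i)
          rw [show r + (j : ℕ) = (n - nn i).toNat + r by omega]
        rw [this]
        exact subset_span ⟨_, rfl⟩
      · rw [pow_zero_of_le (show l i ≤ r + (j : ℕ) by omega) (hvzero i)]
        exact zero_mem _
    · rw [span_le]
      rintro _ ⟨⟨i, hi⟩, rfl⟩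
      show G ⟨i, hi⟩ ∈ _
      apply subset_span
      refine ⟨⟨i, ⟨(n - nn i).toNat, by omega⟩⟩, by simp only [Set.mem_setOf_eq]; omega, ?_⟩
      show (A ^ r) ((A ^ ((n - nn i).toNat : ℕ)) (v i)) = G ⟨i, hi⟩
      rw [← Module.End.mul_apply, ← pow_add, hG]
      show (A ^ (r + (n - nn i).toNat)) (v i) = (A ^ ((n - nn i).toNat + r)) (v i)
      rw [show r + (n - nn i).toNat = (n - nn i).toNat + r by omega]
  rw [hspn]
  have hGinj : Function.Injective (fun i : I => (⟨i.1, ⟨(n - nn i.1).toNat + r, i.2.2⟩⟩ : Σ i, Fin (l i))) := by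
    intro a b hab
    exact Subtype.ext (congrArg Sigma.fst hab)
  have hGli : LinearIndependent ℂ G := hli.comp _ hGinj
  exact finrank_span_eq_card hGli
end StringData

end Aux

lemma card_subtype_eq_filter {α : Type} [Fintype α] [DecidableEq α] (f : α → ℤ × ℕ)
    (P : ℤ × ℕ → Prop) [DecidablePred P] :
    Fintype.card {a // P (f a)} = ((Multiset.map f Finset.univ.val).filter P).card := by
  rw [Multiset.filter_map, Multiset.card_map, Fintype.card_subtype]
  rw [Finset.card, Finset.filter_val]
  congr 1

theorem stmt7 {V : Type} [AddCommGroup V] [Module ℂ V] [FiniteDimensional ℂ V]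
    (Vgr : ℤ → Submodule ℂ V) (hint : DirectSum.IsInternal Vgr)
    (A B : Module.End ℂ V)
    (hAgr : ∀ n, (Vgr n).map A ≤ Vgr (n + 1)) (hBgr : ∀ n, (Vgr n).map B ≤ Vgr (n + 1))
    (hAnil : IsNilpotent A) (hBnil : IsNilpotent B)
    (hle : ∀ (r : ℕ) (n : ℤ),
      Module.finrank ℂ ((Vgr n).map (B ^ r)) ≤ Module.finrank ℂ ((Vgr n).map (A ^ r)))
    (hge : ∀ (r : ℕ) (n : ℤ),
      Module.finrank ℂ ((Vgr n).map (A ^ r)) ≤ Module.finrank ℂ ((Vgr n).map (B ^ r))) :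
    ∃ g : V ≃ₗ[ℂ] V,
      (∀ n, (Vgr n).map (g : V →ₗ[ℂ] V) = Vgr n) ∧
      ∀ v : V, B v = g (A (g.symm v)) := by
  classical
  obtain ⟨ιA, instA, nA, lA, vA, hposA, _, hdegA, hzeroA, hliA, hspanA⟩ :=
    exists_graded_strings Vgr hint A hAgr hAnil (finrank ℂ V) ⊤ (by rw [finrank_top])
      (fun x _ n => trivial) (fun x _ => trivial)
  obtain ⟨ιB, instB, nB, lB, vB, hposB, _, hdegB, hzeroB, hliB, hspanB⟩ :=
    exists_graded_strings Vgr hint B hBgr hBnil (finrank ℂ V) ⊤ (by rw [finrank_top])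
      (fun x _ n => trivial) (fun x _ => trivial)
  haveI := instA; haveI := instB
  rw [show (⊤ : Submodule ℂ V) = ⊤ from rfl] at hspanA  -- noop
  -- span = ⊤ conversions
  have hspanA' : span ℂ (Set.range fun p : (Σ i, Fin (lA i)) => (A ^ (p.2 : ℕ)) (vA p.1)) = ⊤ := hspanA
  have hspanB' : span ℂ (Set.range fun p : (Σ i, Fin (lB i)) => (B ^ (p.2 : ℕ)) (vB p.1)) = ⊤ := hspanB
  set fA : ιA → ℤ × ℕ := fun i => (nA i, lA i) with hfA
  set fB : ιB → ℤ × ℕ := fun i => (nB i, lB i) with hfB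
  set MA := Multiset.map fA Finset.univ.val with hMA
  set MB := Multiset.map fB Finset.univ.val with hMB
  have hfilter : ∀ (n : ℤ) (r : ℕ),
      (MA.filter (fun q => q.1 ≤ n ∧ (n - q.1).toNat + r < q.2)).card =
      (MB.filter (fun q => q.1 ≤ n ∧ (n - q.1).toNat + r < q.2)).card := by
    intro n r
    have h1 := card_subtype_eq_filter fA (fun q => q.1 ≤ n ∧ (n - q.1).toNat + r < q.2)
    have h2 := card_subtype_eq_filter fB (fun q => q.1 ≤ n ∧ (n - q.1).toNat + r < q.2)
    have h3 := rank_formula Vgr hint hAgr hdegA hzeroA hliA hspanA' r n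
    have h4 := rank_formula Vgr hint hBgr hdegB hzeroB hliB hspanB' r n
    have h5 : finrank ℂ ((Vgr n).map (A ^ r)) = finrank ℂ ((Vgr n).map (B ^ r)) :=
      le_antisymm (hge r n) (hle r n)
    rw [← h1, ← h2]
    have h6 : Fintype.card {a // (fun q => q.1 ≤ n ∧ (n - q.1).toNat + r < q.2) (fA a)} =
        Fintype.card {i : ιA // nA i ≤ n ∧ (n - nA i).toNat + r < lA i} := rfl
    have h7 : Fintype.card {a // (fun q => q.1 ≤ n ∧ (n - q.1).toNat + r < q.2) (fB a)} =
        Fintype.card {i : ιB // nB i ≤ n ∧ (n - nB i).toNat + r < lB i} := rfl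
    rw [h6, h7, ← h3, ← h4, h5]
  have hM : MA = MB := by
    apply multiset_eq_of_rank_eq
    · intro p hp
      obtain ⟨i, _, rfl⟩ := Multiset.mem_map.mp hp
      exact hposA i
    · intro p hp
      obtain ⟨i, _, rfl⟩ := Multiset.mem_map.mp hp
      exact hposB i
    · exact hfilter
  obtain ⟨σ, hσ⟩ := equiv_of_map_univ_eq fA fB hM
  have hn : ∀ i, nB (σ i) = nA i := fun i => congrArg Prod.fst (hσ i)
  have hl : ∀ i, lB (σ i) = lA i := fun i => congrArg Prod.snd (hσ i)
  set FA := fun p : (Σ i, Fin (lA i)) => (A ^ (p.2 : ℕ)) (vA p.1) with hFA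
  set FB := fun p : (Σ i, Fin (lB i)) => (B ^ (p.2 : ℕ)) (vB p.1) with hFB
  set bA : Basis (Σ i, Fin (lA i)) ℂ V := Basis.mk hliA (by rw [hspanA']) with hbA
  set bB : Basis (Σ i, Fin (lB i)) ℂ V := Basis.mk hliB (by rw [hspanB']) with hbB
  set E : (Σ i, Fin (lA i)) ≃ (Σ i', Fin (lB i')) :=
    Equiv.sigmaCongr σ (fun i => finCongr (hl i).symm) with hE
  have hEval : ∀ (i : ιA) (j : Fin (lA i)),
      E ⟨i, j⟩ = ⟨σ i, ⟨(j : ℕ), by rw [hl]; exact j.2⟩⟩ := by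
    intro i j
    rfl
  set g : V ≃ₗ[ℂ] V := bA.equiv bB E with hg
  have hgb : ∀ p, g (bA p) = bB (E p) := fun p => bA.equiv_apply p bB E
  have hgA : ∀ p, g (FA p) = FB (E p) := by
    intro p
    have h1 : FA p = bA p := by rw [hbA, Basis.mk_apply]
    have h2 : FB (E p) = bB (E p) := by rw [hbB, Basis.mk_apply]
    rw [h1, h2]
    exact hgb p
  have hgsymmB : ∀ q, g.symm (FB q) = FA (E.symm q) := by
    intro q
    have := hgA (E.symm q)
    rw [Equiv.apply_symm_apply] at this
    rw [← this, LinearEquiv.symm_apply_apply]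
  -- degree of E p
  have hdegE : ∀ p : (Σ i, Fin (lA i)), nB (E p).1 + ((E p).2 : ℕ) = nA p.1 + (p.2 : ℕ) := by
    rintro ⟨i, j⟩
    rw [hEval]
    simp [hn i]
  -- grading preservation
  have hmaple : ∀ n, (Vgr n).map (g : V →ₗ[ℂ] V) ≤ Vgr n := by
    intro n
    have hpiece := graded_piece_span Vgr hint hAgr hdegA hliA hspanA' n
    conv_lhs => rw [hpiece]
    rw [Submodule.map_span, span_le]
    rintro _ ⟨_, ⟨p, hp, rfl⟩, rfl⟩
    show (g : V →ₗ[ℂ] V) (FA p) ∈ (Vgr n : Set V)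
    have h1 : (g : V →ₗ[ℂ] V) (FA p) = FB (E p) := hgA p
    rw [h1]
    have h2 := pow_deg Vgr hBgr ((E p).2 : ℕ) (nB (E p).1) (vB (E p).1) (hdegB (E p).1)
    rw [hdegE p] at h2
    simp only [Set.mem_setOf_eq] at hp
    rw [hp] at h2
    exact SetLike.mem_coe.mpr h2
  have hmaplesymm : ∀ n, (Vgr n).map (g.symm : V →ₗ[ℂ] V) ≤ Vgr n := by
    intro n
    have hpiece := graded_piece_span Vgr hint hBgr hdegB hliB hspanB' n
    conv_lhs => rw [hpiece]
    rw [Submodule.map_span, span_le]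
    rintro _ ⟨_, ⟨q, hq, rfl⟩, rfl⟩
    show (g.symm : V →ₗ[ℂ] V) (FB q) ∈ (Vgr n : Set V)
    rw [show (g.symm : V →ₗ[ℂ] V) (FB q) = FA (E.symm q) from hgsymmB q]
    have h2 := pow_deg Vgr hAgr ((E.symm q).2 : ℕ) (nA (E.symm q).1) (vA (E.symm q).1)
      (hdegA (E.symm q).1)
    have h3 : nA (E.symm q).1 + ((E.symm q).2 : ℕ) = nB q.1 + (q.2 : ℕ) := by
      have := hdegE (E.symm q)
      rw [Equiv.apply_symm_apply] at this
      omega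
    rw [h3] at h2
    simp only [Set.mem_setOf_eq] at hq
    rw [hq] at h2
    exact SetLike.mem_coe.mpr h2
  have hmap : ∀ n, (Vgr n).map (g : V →ₗ[ℂ] V) = Vgr n := by
    intro n
    refine le_antisymm (hmaple n) ?_
    intro x hx
    have h1 : g.symm x ∈ Vgr n := hmaplesymm n ⟨x, hx, rfl⟩
    exact ⟨g.symm x, h1, g.apply_symm_apply x⟩
  -- conjugation
  have hconj : (B : Module.End ℂ V) ∘ₗ (g : V →ₗ[ℂ] V) = (g : V →ₗ[ℂ] V) ∘ₗ A := by
    apply bA.ext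
    rintro ⟨i, j⟩
    show B ((g : V →ₗ[ℂ] V) (bA ⟨i, j⟩)) = (g : V →ₗ[ℂ] V) (A (bA ⟨i, j⟩))
    have h1 : bA ⟨i, j⟩ = FA ⟨i, j⟩ := by rw [hbA, Basis.mk_apply]
    rw [h1]
    have hLHS : B ((g : V →ₗ[ℂ] V) (FA ⟨i, j⟩)) = (B ^ ((j : ℕ) + 1)) (vB (σ i)) := by
      rw [show ((g : V →ₗ[ℂ] V) (FA ⟨i, j⟩)) = FB (E ⟨i, j⟩) from hgA ⟨i, j⟩, hEval]
      show B ((B ^ (j : ℕ)) (vB (σ i))) = _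
      rw [← Module.End.mul_apply, ← pow_succ']
    have hA1 : A (FA ⟨i, j⟩) = (A ^ ((j : ℕ) + 1)) (vA i) := by
      show A ((A ^ (j : ℕ)) (vA i)) = _
      rw [← Module.End.mul_apply, ← pow_succ']
    rw [hLHS, hA1]
    by_cases hcase : (j : ℕ) + 1 < lA i
    · have h2 : (A ^ ((j : ℕ) + 1)) (vA i) = FA ⟨i, ⟨(j : ℕ) + 1, hcase⟩⟩ := rfl
      rw [h2, show ((g : V →ₗ[ℂ] V) (FA ⟨i, ⟨(j : ℕ) + 1, hcase⟩⟩)) = FB (E ⟨i, ⟨(j : ℕ) + 1, hcase⟩⟩) from hgA _, hEval]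
    · have hj1 : lA i ≤ (j : ℕ) + 1 := by omega
      have h2 : (A ^ ((j : ℕ) + 1)) (vA i) = 0 := pow_zero_of_le hj1 (hzeroA i)
      have h3 : (B ^ ((j : ℕ) + 1)) (vB (σ i)) = 0 :=
        pow_zero_of_le (by rw [hl]; omega) (hzeroB (σ i))
      rw [h2, h3, map_zero]
  refine ⟨g, hmap, ?_⟩
  intro x
  have := congrArg (fun f => f (g.symm x)) hconj
  simp only [LinearMap.comp_apply] at this
  simpa using this
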